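/- arXiv:2106.09836 — 5 statements merged into one kernel-verified Lean document; each statement's English description precedes it below -/
import Mathlib

section
/- For cadlag functions f₁, f₂ : [0,∞) → ℝ, define s(x,y) = sup_{z ∈ [x,y]} (f₂(z) - f₁(z⁻)). If f₁ has only nonnegative jumps (f₁(z) ≥ f₁(z⁻) for all z), then for each fixed x, the function y ↦ s(x,y) is nondecreasing and right-continuous (cadlag). -/
open Filter Set Topology

/-- Left limit with the convention `f(0⁻) = 0`. -/
noncomputable def lml (f : ℝ → ℝ) (z : ℝ) : ℝ := if z ≤ 0 then 0 else Function.leftLim f z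

/-- Cadlag on `[0, ∞)`: right-continuous at every `x ≥ 0`, left limits exist at every `x > 0`. -/
def Cadlag (f : ℝ → ℝ) : Prop :=
  (∀ x : ℝ, 0 ≤ x → ContinuousWithinAt f (Set.Ici x) x) ∧
  (∀ x : ℝ, 0 < x → ∃ l : ℝ, Filter.Tendsto f (nhdsWithin x (Set.Iio x)) (nhds l))

/-- All jumps are nonnegative (with the convention `f(0⁻) = 0`). -/
def NonnegJumps (f : ℝ → ℝ) : Prop := ∀ z : ℝ, 0 ≤ z → lml f z ≤ f z

/-- `S f₁ f₂ x y = sup_{z ∈ [x,y]} (f₂ z - f₁ (z⁻))`. -/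
noncomputable def S (f₁ f₂ : ℝ → ℝ) (x y : ℝ) : ℝ :=
  sSup ((fun z => f₂ z - lml f₁ z) '' Set.Icc x y)

/-- `Sm f₁ f₂ x y = sup_{z ∈ [x,y)} (f₂ z - f₁ (z⁻))`. -/
noncomputable def Sm (f₁ f₂ : ℝ → ℝ) (x y : ℝ) : ℝ :=
  sSup ((fun z => f₂ z - lml f₁ z) '' Set.Ico x y)

lemma cadlag_abs_bound (f : ℝ → ℝ) (hf : Cadlag f) (Y : ℝ) :
    ∃ M : ℝ, ∀ z ∈ Icc (0:ℝ) Y, |f z| ≤ M := by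
  have loc : ∀ t ∈ Icc (0:ℝ) Y, ∃ M, ∀ᶠ z in 𝓝 t, z ∈ Icc (0:ℝ) Y → |f z| ≤ M := by
    intro t ht
    have hr : Tendsto f (𝓝[≥] t) (𝓝 (f t)) := hf.1 t ht.1
    have hr' : ∀ᶠ z in 𝓝 t, z ∈ Ici t → |f z| ≤ |f t| + 1 := by
      rw [← eventually_nhdsWithin_iff]
      filter_upwards [hr (Metric.ball_mem_nhds (f t) one_pos)] with z hz
      have : |f z - f t| < 1 := by simpa [Real.dist_eq] using hz
      calc |f z| ≤ |f z - f t| + |f t| := by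
            simpa using abs_add_le (f z - f t) (f t)
        _ ≤ |f t| + 1 := by linarith
    rcases ht.1.eq_or_lt with h0 | h0
    · refine ⟨|f t| + 1, ?_⟩
      filter_upwards [hr'] with z hz hzY
      exact hz (h0 ▸ hzY.1)
    · obtain ⟨l, hl⟩ := hf.2 t h0
      have hl' : ∀ᶠ z in 𝓝 t, z ∈ Iio t → |f z| ≤ |l| + 1 := by
        rw [← eventually_nhdsWithin_iff]
        filter_upwards [hl (Metric.ball_mem_nhds l one_pos)] with z hz
        have : |f z - l| < 1 := by simpa [Real.dist_eq] using hz
        calc |f z| ≤ |f z - l| + |l| := by simpa using abs_add_le (f z - l) l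
          _ ≤ |l| + 1 := by linarith
      refine ⟨max (|f t| + 1) (|l| + 1), ?_⟩
      filter_upwards [hr', hl'] with z h1 h2 hzY
      rcases lt_or_ge z t with h | h
      · exact le_trans (h2 h) (le_max_right _ _)
      · exact le_trans (h1 h) (le_max_left _ _)
  choose! M hM using loc
  have hcov := isCompact_Icc.elim_nhds_subcover
      (fun t => {z | z ∈ Icc (0:ℝ) Y → |f z| ≤ M t}) (fun t ht => hM t ht)
  obtain ⟨T, hTs, hT⟩ := hcov
  rcases T.eq_empty_or_nonempty with rfl | hTne
  · refine ⟨0, fun z hz => absurd (hT hz) (by simp)⟩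
  · refine ⟨(T.image M).max' (hTne.image M), fun z hz => ?_⟩
    obtain ⟨t, htT, hzt⟩ := by simpa using hT hz
    exact le_trans (hzt hz.1 hz.2) (Finset.le_max' _ _ (Finset.mem_image_of_mem M htT))

lemma tendsto_leftLim (f : ℝ → ℝ) (hf : Cadlag f) (z : ℝ) (hz : 0 < z) :
    Tendsto f (𝓝[<] z) (𝓝 (Function.leftLim f z)) := by
  obtain ⟨l, hl⟩ := hf.2 z hz
  have : Function.leftLim f z = l :=
    leftLim_eq_of_tendsto hl
  rw [this]; exact hl

lemma lml_bound (f : ℝ → ℝ) (hf : Cadlag f) (Y M : ℝ)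
    (hM : ∀ z ∈ Icc (0:ℝ) Y, |f z| ≤ M) :
    ∀ z ∈ Icc (0:ℝ) Y, |lml f z| ≤ max M 0 := by
  intro z hz
  rcases le_or_gt z 0 with h | h
  · simp [lml, h]
  · rw [lml, if_neg (not_le.2 h)]
    have ht := tendsto_leftLim f hf z h
    have hev : ∀ᶠ w in 𝓝[<] z, |f w| ≤ M := by
      filter_upwards [Ioo_mem_nhdsLT_of_mem (show z ∈ Ioc (0:ℝ) z from ⟨h, le_refl z⟩)]
        with w hw
      exact hM w ⟨hw.1.le, hw.2.le.trans hz.2⟩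
    have : |Function.leftLim f z| ≤ M :=
      le_of_tendsto (ht.abs) hev
    exact this.trans (le_max_left _ _)

lemma bddAbove_g (f₁ f₂ : ℝ → ℝ) (h₁ : Cadlag f₁) (h₂ : Cadlag f₂) (x Y : ℝ) (hx : 0 ≤ x) :
    BddAbove ((fun z => f₂ z - lml f₁ z) '' Icc x Y) := by
  obtain ⟨M₁, hM₁⟩ := cadlag_abs_bound f₁ h₁ Y
  obtain ⟨M₂, hM₂⟩ := cadlag_abs_bound f₂ h₂ Y
  refine ⟨M₂ + max M₁ 0, ?_⟩
  rintro _ ⟨z, hz, rfl⟩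
  have hz' : z ∈ Icc (0:ℝ) Y := ⟨hx.trans hz.1, hz.2⟩
  have h1 := lml_bound f₁ h₁ Y M₁ hM₁ z hz'
  have h2 := hM₂ z hz'
  have := abs_le.1 h1; have := abs_le.1 h2
  simp only []; linarith [(abs_le.1 h1).1, (abs_le.1 h2).2]

theorem stmt1 (f₁ f₂ : ℝ → ℝ) (h₁ : Cadlag f₁) (h₂ : Cadlag f₂)
    (hj : NonnegJumps f₁) (x : ℝ) (hx : 0 ≤ x) :
    MonotoneOn (fun y => S f₁ f₂ x y) (Set.Ici x) ∧
    ∀ y : ℝ, x ≤ y → ContinuousWithinAt (fun y' => S f₁ f₂ x y') (Set.Ici y) y := by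
  set g : ℝ → ℝ := fun z => f₂ z - lml f₁ z with hg
  have hbdd : ∀ Y : ℝ, BddAbove (g '' Icc x Y) := fun Y => bddAbove_g f₁ f₂ h₁ h₂ x Y hx
  have hmono : MonotoneOn (fun y => S f₁ f₂ x y) (Set.Ici x) := by
    intro y₁ hy₁ y₂ hy₂ h12
    exact csSup_le_csSup (hbdd y₂) ⟨g x, ⟨x, ⟨le_refl x, hy₁⟩, rfl⟩⟩
      (image_mono (Icc_subset_Icc_right h12))
  refine ⟨hmono, fun y hy => ?_⟩
  have hySy : g y ≤ S f₁ f₂ x y := le_csSup (hbdd y) ⟨y, ⟨hy, le_refl y⟩, rfl⟩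
  rw [ContinuousWithinAt, tendsto_order]
  constructor
  · intro a ha
    filter_upwards [self_mem_nhdsWithin] with y' hy'
    exact lt_of_lt_of_le ha (hmono hy (hy.trans hy') hy')
  · intro b hb
    set ε := b - S f₁ f₂ x y with hε
    have hεpos : 0 < ε := sub_pos.2 hb
    have hy0 : 0 ≤ y := hx.trans hy
    -- find u > y such that for z in (y, u), g z ≤ S x y + ε/2
    obtain ⟨u₂, hu₂y, hu₂⟩ : ∃ u ∈ Ioi y, ∀ z ∈ Ico y u, f₂ z ≤ f₂ y + ε / 4 := by
      have hev : ∀ᶠ z in 𝓝[≥] y, f₂ z ≤ f₂ y + ε/4 :=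
        (h₂.1 y hy0).eventually (eventually_le_nhds (by linarith))
      obtain ⟨u, hu, hsub⟩ := mem_nhdsGE_iff_exists_Ico_subset.1 hev
      exact ⟨u, hu, fun z hz => hsub hz⟩
    obtain ⟨u₁, hu₁y, hu₁⟩ : ∃ u ∈ Ioi y, ∀ w ∈ Ico y u, f₁ y - ε / 4 ≤ f₁ w := by
      have hev : ∀ᶠ z in 𝓝[≥] y, f₁ y - ε/4 ≤ f₁ z :=
        (h₁.1 y hy0).eventually (eventually_ge_nhds (by linarith))
      obtain ⟨u, hu, hsub⟩ := mem_nhdsGE_iff_exists_Ico_subset.1 hev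
      exact ⟨u, hu, fun z hz => hsub hz⟩
    set u := min u₁ u₂ with hu
    have huy : y < u := lt_min hu₁y hu₂y
    have key : ∀ z ∈ Ioo y u, g z ≤ S f₁ f₂ x y + ε / 2 := by
      intro z hz
      have hz0 : 0 < z := lt_of_le_of_lt hy0 hz.1
      have hlml : lml f₁ z = Function.leftLim f₁ z := if_neg (not_le.2 hz0)
      have hll : f₁ y - ε / 4 ≤ Function.leftLim f₁ z := by
        refine ge_of_tendsto (tendsto_leftLim f₁ h₁ z hz0) ?_
        filter_upwards [Ioo_mem_nhdsLT_of_mem (show z ∈ Ioc y z from ⟨hz.1, le_refl z⟩)]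
          with w hw
        exact hu₁ w ⟨hw.1.le, hw.2.trans_le ((min_le_left _ _).trans_lt' hz.2).le⟩
      have hf2 : f₂ z ≤ f₂ y + ε / 4 := hu₂ z ⟨hz.1.le, hz.2.trans_le (min_le_right _ _)⟩
      have hjump : lml f₁ y ≤ f₁ y := hj y hy0
      have : g z ≤ f₂ y - f₁ y + ε / 2 := by
        simp only [hg, hlml]; linarith
      have h2 : f₂ y - f₁ y ≤ g y := by simp only [hg]; linarith
      linarith [hySy]
    have hIoo : Ico y u ∈ 𝓝[≥] y :=
      mem_nhdsGE_iff_exists_Ico_subset.2 ⟨u, huy, subset_refl _⟩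
    filter_upwards [hIoo, self_mem_nhdsWithin] with y' hy' hy'2
    have hS : S f₁ f₂ x y' ≤ S f₁ f₂ x y + ε / 2 := by
      refine csSup_le ⟨g x, ⟨x, ⟨le_refl x, hy.trans hy'2⟩, rfl⟩⟩ ?_
      rintro _ ⟨z, hz, rfl⟩
      rcases le_or_gt z y with h | h
      · have hrfl : sSup (g '' Icc x y) = S f₁ f₂ x y := rfl
        exact (le_csSup (hbdd y) ⟨z, ⟨hz.1, h⟩, rfl⟩).trans (by rw [hrfl]; linarith)
      · exact key z ⟨h, lt_of_le_of_lt hz.2 hy'.2⟩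
    linarith
end

section
/- Let f₁, f₂ : [0,∞) → ℝ be cadlag with nonnegative jumps and f₁(0⁻) = f₂(0⁻) = 0. Define the Pitman transform W(f₁,f₂) = (g₁,g₂) by g₁(t) = f₁(t) + s(0,t) and g₂(t) = f₂(t) - s(0,t), where s(x,y) = sup_{z∈[x,y]} (f₂(z) - f₁(z⁻)). Then g₁ and g₂ are cadlag with nonnegative jumps, and g₁(t) + g₂(t) = f₁(t) + f₂(t) for all t. -/
open Filter Set Topology

/-- First component of the Pitman transform. -/
noncomputable def Wp1 (f₁ f₂ : ℝ → ℝ) : ℝ → ℝ := fun t => f₁ t + S f₁ f₂ 0 t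

/-- Second component of the Pitman transform. -/
noncomputable def Wp2 (f₁ f₂ : ℝ → ℝ) : ℝ → ℝ := fun t => f₂ t - S f₁ f₂ 0 t

section Aux

open Function

variable {f f₁ f₂ : ℝ → ℝ}

lemma Cadlag.tendsto_left (hf : Cadlag f) {x : ℝ} (hx : 0 < x) :
    Tendsto f (𝓝[<] x) (𝓝 (leftLim f x)) := by
  obtain ⟨l, hl⟩ := hf.2 x hx
  rwa [leftLim_eq_of_tendsto hl]

lemma Cadlag.bdd (hf : Cadlag f) (t : ℝ) :
    ∃ a b : ℝ, ∀ z ∈ Icc (0:ℝ) t, f z ∈ Icc a b := by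
  have key : ∃ a b : ℝ, ∀ z ∈ f '' Icc (0:ℝ) t, z ∈ Icc a b := by
    refine IsCompact.induction_on (isCompact_Icc)
        (p := fun s => ∃ a b : ℝ, ∀ z ∈ f '' s, z ∈ Icc a b) ⟨0, 0, by simp⟩ ?_ ?_ ?_
    · rintro s u hsu ⟨a, b, hab⟩
      exact ⟨a, b, fun z hz => hab z (image_mono (f := f) hsu hz)⟩
    · rintro s u ⟨a, b, hab⟩ ⟨a', b', hab'⟩
      refine ⟨min a a', max b b', ?_⟩
      rw [image_union]
      rintro z (hz | hz)
      · exact ⟨(min_le_left _ _).trans (hab z hz).1, (hab z hz).2.trans (le_max_left _ _)⟩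
      · exact ⟨(min_le_right _ _).trans (hab' z hz).1, (hab' z hz).2.trans (le_max_right _ _)⟩
    · intro x hx
      have hr : ∀ᶠ y in 𝓝[≥] x, f y ∈ Icc (f x - 1) (f x + 1) :=
        (hf.1 x hx.1).eventually (Icc_mem_nhds (by linarith) (by linarith))
      rcases eq_or_lt_of_le hx.1 with h0 | h0
      · have hmono : 𝓝[Icc (0:ℝ) t] x ≤ 𝓝[≥] x := by
          rw [← h0]; exact nhdsWithin_mono _ Icc_subset_Ici_self
        refine ⟨{y | f y ∈ Icc (f x - 1) (f x + 1)}, hmono hr, f x - 1, f x + 1, ?_⟩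
        rintro z ⟨y, hy, rfl⟩; exact hy
      · set L := leftLim f x with hL
        have hl : ∀ᶠ y in 𝓝[<] x, f y ∈ Icc (L - 1) (L + 1) :=
          (hf.tendsto_left h0).eventually (Icc_mem_nhds (by linarith) (by linarith))
        have hcomb : ∀ᶠ y in 𝓝 x, f y ∈ Icc (min (f x - 1) (L - 1)) (max (f x + 1) (L + 1)) := by
          rw [← nhdsLT_sup_nhdsGE x, eventually_sup]
          constructor
          · filter_upwards [hl] with y hy
            exact ⟨(min_le_right _ _).trans hy.1, hy.2.trans (le_max_right _ _)⟩
          · filter_upwards [hr] with y hy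
            exact ⟨(min_le_left _ _).trans hy.1, hy.2.trans (le_max_left _ _)⟩
        refine ⟨{y | f y ∈ Icc (min (f x - 1) (L - 1)) (max (f x + 1) (L + 1))},
          mem_nhdsWithin_of_mem_nhds hcomb,
          min (f x - 1) (L - 1), max (f x + 1) (L + 1), ?_⟩
        rintro z ⟨y, hy, rfl⟩; exact hy
  obtain ⟨a, b, hab⟩ := key
  exact ⟨a, b, fun z hz => hab _ (mem_image_of_mem f hz)⟩

lemma lml_mem (h₁ : Cadlag f₁) {t a b : ℝ} (hab : ∀ z ∈ Icc (0:ℝ) t, f₁ z ∈ Icc a b) :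
    ∀ z ∈ Icc (0:ℝ) t, lml f₁ z ∈ Icc (min a 0) (max b 0) := by
  intro z hz
  by_cases hz0 : z ≤ 0
  · rw [lml, if_pos hz0]
    exact ⟨min_le_right _ _, le_max_right _ _⟩
  · push_neg at hz0
    rw [lml, if_neg (not_le.2 hz0)]
    have ht := h₁.tendsto_left hz0
    have hev : ∀ᶠ y in 𝓝[<] z, f₁ y ∈ Icc a b := by
      filter_upwards [Ioo_mem_nhdsLT hz0] with y hy
      exact hab y ⟨hy.1.le, hy.2.le.trans hz.2⟩
    constructor
    · exact (min_le_left a 0).trans (ge_of_tendsto ht (hev.mono fun y hy => hy.1))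
    · exact (le_of_tendsto ht (hev.mono fun y hy => hy.2)).trans (le_max_left b 0)

lemma H_bddAbove (h₁ : Cadlag f₁) (h₂ : Cadlag f₂) (t : ℝ) :
    BddAbove ((fun z => f₂ z - lml f₁ z) '' Icc 0 t) := by
  obtain ⟨a₁, b₁, hb₁⟩ := h₁.bdd t
  obtain ⟨a₂, b₂, hb₂⟩ := h₂.bdd t
  refine ⟨b₂ - min a₁ 0, ?_⟩
  rintro _ ⟨z, hz, rfl⟩
  have h1 := (lml_mem h₁ hb₁ z hz).1
  have h2 := (hb₂ z hz).2
  simp only [mem_upperBounds] at *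
  linarith

lemma S_nonempty {t : ℝ} (ht : 0 ≤ t) :
    ((fun z => f₂ z - lml f₁ z) '' Icc 0 t).Nonempty :=
  ⟨_, mem_image_of_mem _ (left_mem_Icc.2 ht)⟩

lemma le_S (h₁ : Cadlag f₁) (h₂ : Cadlag f₂) {z t : ℝ} (hz : 0 ≤ z) (hzt : z ≤ t) :
    f₂ z - lml f₁ z ≤ S f₁ f₂ 0 t :=
  le_csSup (H_bddAbove h₁ h₂ t) (mem_image_of_mem _ ⟨hz, hzt⟩)

lemma S_le {t c : ℝ} (ht : 0 ≤ t) (hc : ∀ z ∈ Icc (0:ℝ) t, f₂ z - lml f₁ z ≤ c) :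
    S f₁ f₂ 0 t ≤ c :=
  csSup_le (S_nonempty ht) (by rintro _ ⟨z, hz, rfl⟩; exact hc z hz)

lemma S_mono (h₁ : Cadlag f₁) (h₂ : Cadlag f₂) {a b : ℝ} (ha : 0 ≤ a) (hab : a ≤ b) :
    S f₁ f₂ 0 a ≤ S f₁ f₂ 0 b :=
  csSup_le_csSup (H_bddAbove h₁ h₂ b) (S_nonempty ha)
    (image_mono (Icc_subset_Icc_right hab))

lemma Sm_le_S (h₁ : Cadlag f₁) (h₂ : Cadlag f₂) {t : ℝ} (ht : 0 < t) :
    Sm f₁ f₂ 0 t ≤ S f₁ f₂ 0 t :=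
  csSup_le_csSup (H_bddAbove h₁ h₂ t) ⟨_, mem_image_of_mem _ (left_mem_Ico.2 ht)⟩
    (image_mono Ico_subset_Icc_self)

lemma le_Sm (h₁ : Cadlag f₁) (h₂ : Cadlag f₂) {z t : ℝ} (hz : 0 ≤ z) (hzt : z < t) :
    f₂ z - lml f₁ z ≤ Sm f₁ f₂ 0 t :=
  le_csSup ((H_bddAbove h₁ h₂ t).mono (image_mono Ico_subset_Icc_self))
    (mem_image_of_mem _ ⟨hz, hzt⟩)

lemma lml_tendsto_right (h₁ : Cadlag f₁) {x : ℝ} (hx : 0 ≤ x) :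
    Tendsto (lml f₁) (𝓝[>] x) (𝓝 (f₁ x)) := by
  rw [Metric.tendsto_nhdsWithin_nhds]
  intro ε hε
  obtain ⟨δ, hδ, hδ'⟩ := Metric.tendsto_nhdsWithin_nhds.1 (h₁.1 x hx) (ε/2) (by linarith)
  refine ⟨δ, hδ, fun z hz hzd => ?_⟩
  have hxz : x < z := hz
  have hz' : 0 < z := lt_of_le_of_lt hx hxz
  rw [lml, if_neg (not_le.2 hz')]
  have ht := h₁.tendsto_left hz'
  have hev : ∀ᶠ y in 𝓝[<] z, dist (f₁ y) (f₁ x) ≤ ε/2 := by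
    filter_upwards [Ioo_mem_nhdsLT hxz] with y hy
    refine (hδ' (le_of_lt hy.1) ?_).le
    rw [Real.dist_eq] at hzd ⊢
    rw [abs_of_pos (by linarith [hy.1] : (0:ℝ) < y - x)]
    rw [abs_of_pos (by linarith : (0:ℝ) < z - x)] at hzd
    linarith [hy.2]
  have hle : dist (leftLim f₁ z) (f₁ x) ≤ ε/2 :=
    le_of_tendsto (ht.dist tendsto_const_nhds) hev
  calc dist (leftLim f₁ z) (f₁ x) ≤ ε/2 := hle
    _ < ε := by linarith

lemma lml_tendsto_left (h₁ : Cadlag f₁) {x : ℝ} (hx : 0 < x) :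
    Tendsto (lml f₁) (𝓝[<] x) (𝓝 (Function.leftLim f₁ x)) := by
  rw [Metric.tendsto_nhdsWithin_nhds]
  intro ε hε
  obtain ⟨δ, hδ, hδ'⟩ := Metric.tendsto_nhdsWithin_nhds.1 (h₁.tendsto_left hx) (ε/2) (by linarith)
  refine ⟨min δ x, lt_min hδ hx, fun z hz hzd => ?_⟩
  have hzx : z < x := hz
  rw [Real.dist_eq, abs_of_neg (by linarith : z - x < 0)] at hzd
  have hz' : 0 < z := by
    have := min_le_right δ x
    linarith
  rw [lml, if_neg (not_le.2 hz')]
  have ht := h₁.tendsto_left hz'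
  have hev : ∀ᶠ y in 𝓝[<] z, dist (f₁ y) (Function.leftLim f₁ x) ≤ ε/2 := by
    filter_upwards [Ioo_mem_nhdsLT (show x - min δ x < z by linarith)] with y hy
    refine (hδ' (show y < x by linarith [hy.2]) ?_).le
    rw [Real.dist_eq, abs_of_neg (by linarith [hy.2] : y - x < 0)]
    have := min_le_left δ x
    linarith [hy.1]
  have hle : dist (Function.leftLim f₁ z) (Function.leftLim f₁ x) ≤ ε/2 :=
    le_of_tendsto (ht.dist tendsto_const_nhds) hev
  calc dist (Function.leftLim f₁ z) (Function.leftLim f₁ x) ≤ ε/2 := hle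
    _ < ε := by linarith

lemma key_Sm (h₁ : Cadlag f₁) (h₂ : Cadlag f₂) {x : ℝ} (hx : 0 < x) :
    Function.leftLim f₂ x - Function.leftLim f₁ x ≤ Sm f₁ f₂ 0 x := by
  have hH : Tendsto (fun z => f₂ z - lml f₁ z) (𝓝[<] x)
      (𝓝 (Function.leftLim f₂ x - Function.leftLim f₁ x)) :=
    (h₂.tendsto_left hx).sub (lml_tendsto_left h₁ hx)
  refine le_of_tendsto hH ?_
  filter_upwards [Ioo_mem_nhdsLT hx] with y hy
  exact le_Sm h₁ h₂ hy.1.le hy.2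

lemma S_tendsto_left (h₁ : Cadlag f₁) (h₂ : Cadlag f₂) {x : ℝ} (hx : 0 < x) :
    Tendsto (fun t => S f₁ f₂ 0 t) (𝓝[<] x) (𝓝 (Sm f₁ f₂ 0 x)) := by
  rw [Metric.tendsto_nhdsWithin_nhds]
  intro ε hε
  have hne : ((fun z => f₂ z - lml f₁ z) '' Ico 0 x).Nonempty :=
    ⟨_, mem_image_of_mem _ (left_mem_Ico.2 hx)⟩
  obtain ⟨w, hw, hw'⟩ := exists_lt_of_lt_csSup hne
    (show Sm f₁ f₂ 0 x - ε < Sm f₁ f₂ 0 x by linarith)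
  obtain ⟨y, hy, rfl⟩ := hw
  refine ⟨x - y, by linarith [hy.2], fun t ht htd => ?_⟩
  have htx : t < x := ht
  rw [Real.dist_eq, abs_of_neg (by linarith : t - x < 0)] at htd
  have hyt : y ≤ t := by linarith
  have h1 : Sm f₁ f₂ 0 x - ε < S f₁ f₂ 0 t := lt_of_lt_of_le hw' (le_S h₁ h₂ hy.1 hyt)
  have h2 : S f₁ f₂ 0 t ≤ Sm f₁ f₂ 0 x := by
    refine S_le (hy.1.trans hyt) fun z hz => ?_
    exact le_Sm h₁ h₂ hz.1 (lt_of_le_of_lt hz.2 htx)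
  rw [Real.dist_eq, abs_lt]
  constructor <;> linarith

lemma S_tendsto_right (h₁ : Cadlag f₁) (h₂ : Cadlag f₂) (hj₁ : NonnegJumps f₁)
    {x : ℝ} (hx : 0 ≤ x) :
    Tendsto (fun t => S f₁ f₂ 0 t) (𝓝[≥] x) (𝓝 (S f₁ f₂ 0 x)) := by
  rw [Metric.tendsto_nhdsWithin_nhds]
  intro ε hε
  have hH : Tendsto (fun z => f₂ z - lml f₁ z) (𝓝[>] x) (𝓝 (f₂ x - f₁ x)) :=
    ((h₂.1 x hx).mono_left (nhdsWithin_mono x Ioi_subset_Ici_self)).sub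
      (lml_tendsto_right h₁ hx)
  have hev : ∀ᶠ z in 𝓝[>] x, f₂ z - lml f₁ z < f₂ x - f₁ x + ε/2 :=
    hH.eventually_lt_const (by linarith)
  obtain ⟨u, hu, hsub⟩ := mem_nhdsGT_iff_exists_Ioo_subset.1 hev
  refine ⟨u - x, by simpa using hu, fun t ht htd => ?_⟩
  have hxt : x ≤ t := ht
  rw [Real.dist_eq, abs_of_nonneg (by linarith : (0:ℝ) ≤ t - x)] at htd
  have h1 : S f₁ f₂ 0 x ≤ S f₁ f₂ 0 t := S_mono h₁ h₂ hx hxt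
  have h2 : S f₁ f₂ 0 t ≤ S f₁ f₂ 0 x + ε/2 := by
    refine S_le (hx.trans hxt) fun z hz => ?_
    rcases le_or_gt z x with hzx | hzx
    · linarith [le_S h₁ h₂ hz.1 hzx]
    · have hzu : z ∈ Ioo x u := ⟨hzx, by linarith [hz.2]⟩
      have := hsub hzu
      have hjx : lml f₁ x ≤ f₁ x := hj₁ x hx
      have hxS : f₂ x - lml f₁ x ≤ S f₁ f₂ 0 x := le_S h₁ h₂ hx le_rfl
      simp only [mem_setOf_eq] at this
      linarith
  rw [Real.dist_eq, abs_lt]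
  constructor <;> linarith

lemma S_zero : S f₁ f₂ 0 0 = f₂ 0 := by
  rw [S, Icc_self, image_singleton, csSup_singleton, lml, if_pos le_rfl, sub_zero]

end Aux

theorem stmt3 (f₁ f₂ : ℝ → ℝ) (h₁ : Cadlag f₁) (h₂ : Cadlag f₂)
    (hj₁ : NonnegJumps f₁) (hj₂ : NonnegJumps f₂) :
    Cadlag (Wp1 f₁ f₂) ∧ NonnegJumps (Wp1 f₁ f₂) ∧
    Cadlag (Wp2 f₁ f₂) ∧ NonnegJumps (Wp2 f₁ f₂) ∧
    ∀ t : ℝ, 0 ≤ t → Wp1 f₁ f₂ t + Wp2 f₁ f₂ t = f₁ t + f₂ t := by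
  have hf10 : (0:ℝ) ≤ f₁ 0 := by
    have := hj₁ 0 le_rfl; rwa [lml, if_pos le_rfl] at this
  have hf20 : (0:ℝ) ≤ f₂ 0 := by
    have := hj₂ 0 le_rfl; rwa [lml, if_pos le_rfl] at this
  refine ⟨⟨?_, ?_⟩, ?_, ⟨?_, ?_⟩, ?_, ?_⟩
  · -- right continuity of Wp1
    intro x hx
    exact ContinuousWithinAt.add (h₁.1 x hx) (S_tendsto_right h₁ h₂ hj₁ hx)
  · -- left limits of Wp1
    intro x hx
    exact ⟨Function.leftLim f₁ x + Sm f₁ f₂ 0 x,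
      (h₁.tendsto_left hx).add (S_tendsto_left h₁ h₂ hx)⟩
  · -- nonneg jumps of Wp1
    intro z hz
    rcases eq_or_lt_of_le hz with h0 | h0
    · rw [lml, if_pos (le_of_eq h0.symm)]
      rw [← h0]
      show (0:ℝ) ≤ f₁ 0 + S f₁ f₂ 0 0
      rw [S_zero]; linarith
    · rw [lml, if_neg (not_le.2 h0)]
      have htd : Tendsto (Wp1 f₁ f₂) (𝓝[<] z)
          (𝓝 (Function.leftLim f₁ z + Sm f₁ f₂ 0 z)) :=
        (h₁.tendsto_left h0).add (S_tendsto_left h₁ h₂ h0)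
      rw [leftLim_eq_of_tendsto htd]
      have hjz : Function.leftLim f₁ z ≤ f₁ z := by
        have := hj₁ z hz; rwa [lml, if_neg (not_le.2 h0)] at this
      exact add_le_add hjz (Sm_le_S h₁ h₂ h0)
  · -- right continuity of Wp2
    intro x hx
    exact ContinuousWithinAt.sub (h₂.1 x hx) (S_tendsto_right h₁ h₂ hj₁ hx)
  · -- left limits of Wp2
    intro x hx
    exact ⟨Function.leftLim f₂ x - Sm f₁ f₂ 0 x,
      (h₂.tendsto_left hx).sub (S_tendsto_left h₁ h₂ hx)⟩
  · -- nonneg jumps of Wp2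
    intro z hz
    rcases eq_or_lt_of_le hz with h0 | h0
    · rw [lml, if_pos (le_of_eq h0.symm)]
      rw [← h0]
      show (0:ℝ) ≤ f₂ 0 - S f₁ f₂ 0 0
      rw [S_zero]; linarith
    · rw [lml, if_neg (not_le.2 h0)]
      have htd : Tendsto (Wp2 f₁ f₂) (𝓝[<] z)
          (𝓝 (Function.leftLim f₂ z - Sm f₁ f₂ 0 z)) :=
        (h₂.tendsto_left h0).sub (S_tendsto_left h₁ h₂ h0)
      rw [leftLim_eq_of_tendsto htd]
      show Function.leftLim f₂ z - Sm f₁ f₂ 0 z ≤ f₂ z - S f₁ f₂ 0 z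
      have hjz : Function.leftLim f₂ z ≤ f₂ z := by
        have := hj₂ z hz; rwa [lml, if_neg (not_le.2 h0)] at this
      have hS : S f₁ f₂ 0 z ≤ f₂ z - Function.leftLim f₂ z + Sm f₁ f₂ 0 z := by
        refine S_le hz fun w hw => ?_
        rcases lt_or_eq_of_le hw.2 with hwz | hwz
        · have := le_Sm h₁ h₂ hw.1 hwz
          linarith
        · subst hwz
          rw [lml, if_neg (not_le.2 h0)]
          have := key_Sm h₁ h₂ h0
          linarith
      linarith
  · intro t _
    show f₁ t + S f₁ f₂ 0 t + (f₂ t - S f₁ f₂ 0 t) = f₁ t + f₂ t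
    ring
end

section
/- Let f₁, f₂ : [0,∞) → ℝ be cadlag with nonnegative jumps, define s(x,y) = sup_{z∈[x,y]}(f₂(z)-f₁(z⁻)), and let (g₁,g₂) be the Pitman transform: g₁(t) = f₁(t)+s(0,t), g₂(t) = f₂(t)-s(0,t). Then for all 0 ≤ x ≤ y: f₁(y) - f₂(x⁻) + s(x,y) = g₁(y) - g₂(x⁻) + sup_{z∈[x,y]}(g₂(z)-g₁(z⁻)). That is, the Pitman transform preserves two-line last passage values. -/
open Filter Set

open Function Topology

noncomputable def hh (f₁ f₂ : ℝ → ℝ) : ℝ → ℝ := fun z => f₂ z - lml f₁ z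
noncomputable def ss (f₁ f₂ : ℝ → ℝ) : ℝ → ℝ := fun t => S f₁ f₂ 0 t

lemma ss_def (f₁ f₂ : ℝ → ℝ) (t : ℝ) : ss f₁ f₂ t = sSup (hh f₁ f₂ '' Icc 0 t) := rfl

lemma S_def (f₁ f₂ : ℝ → ℝ) (x y : ℝ) : S f₁ f₂ x y = sSup (hh f₁ f₂ '' Icc x y) := rfl

section aux
variable {f₁ f₂ : ℝ → ℝ}

lemma cadlag_tendsto_lml {f : ℝ → ℝ} (hf : Cadlag f) {z : ℝ} (hz : 0 < z) :
    Tendsto f (𝓝[<] z) (𝓝 (lml f z)) := by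
  obtain ⟨l, hl⟩ := hf.2 z hz
  have : lml f z = l := by
    rw [lml, if_neg (not_le.mpr hz)]
    exact leftLim_eq_of_tendsto hl
  rwa [this]

lemma cadlag_abs_bdd {f : ℝ → ℝ} (hf : Cadlag f) (b : ℝ) :
    ∃ M : ℝ, 0 ≤ M ∧ ∀ t ∈ Icc (0:ℝ) b, |f t| ≤ M := by
  rcases lt_or_ge b 0 with hb | hb
  · exact ⟨0, le_rfl, fun t ht => absurd (ht.1.trans ht.2) (not_le.mpr hb)⟩
  have key : ∀ t : ℝ, ∃ ε > (0:ℝ), ∃ M : ℝ,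
      t ∈ Icc (0:ℝ) b → ∀ u ∈ Icc (0:ℝ) b, |u - t| < ε → |f u| ≤ M := by
    intro t
    by_cases ht : t ∈ Icc (0:ℝ) b
    · have hrc := hf.1 t ht.1
      rw [ContinuousWithinAt, Metric.tendsto_nhdsWithin_nhds] at hrc
      obtain ⟨δ₁, hδ₁, h1⟩ := hrc 1 one_pos
      rcases eq_or_lt_of_le ht.1 with h0 | h0
      · refine ⟨δ₁, hδ₁, |f t| + 1, fun _ u hu hd => ?_⟩
        have hut : u ∈ Ici t := by simpa [← h0] using hu.1
        have := h1 hut (by simpa [Real.dist_eq] using hd)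
        rw [Real.dist_eq] at this
        calc |f u| ≤ |f u - f t| + |f t| := by
              simpa using abs_add_le (f u - f t) (f t)
          _ ≤ |f t| + 1 := by linarith
      · obtain ⟨l, hl⟩ := hf.2 t h0
        rw [Metric.tendsto_nhdsWithin_nhds] at hl
        obtain ⟨δ₂, hδ₂, h2⟩ := hl 1 one_pos
        refine ⟨min δ₁ δ₂, lt_min hδ₁ hδ₂, max |f t| |l| + 1, fun _ u hu hd => ?_⟩
        rcases lt_or_ge u t with hut | hut
        · have := h2 hut (by rw [Real.dist_eq]; exact hd.trans_le (min_le_right _ _))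
          rw [Real.dist_eq] at this
          calc |f u| ≤ |f u - l| + |l| := by simpa using abs_add_le (f u - l) l
            _ ≤ max |f t| |l| + 1 := by
                have := le_max_right |f t| |l|; linarith
        · have := h1 hut (by rw [Real.dist_eq]; exact hd.trans_le (min_le_left _ _))
          rw [Real.dist_eq] at this
          calc |f u| ≤ |f u - f t| + |f t| := by simpa using abs_add_le (f u - f t) (f t)
            _ ≤ max |f t| |l| + 1 := by
                have := le_max_left |f t| |l|; linarith
    · exact ⟨1, one_pos, 0, fun h => absurd h ht⟩
  choose ε hε M hM using key
  obtain ⟨F, hF, hcover⟩ := isCompact_Icc.elim_nhds_subcover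
    (fun t => Metric.ball t (ε t)) (fun t _ => Metric.ball_mem_nhds t (hε t))
  have hne : F.Nonempty := by
    by_contra hne
    rw [Finset.not_nonempty_iff_eq_empty] at hne
    have : (0:ℝ) ∈ ⋃ x ∈ F, Metric.ball x (ε x) := hcover ⟨le_rfl, hb⟩
    simp [hne] at this
  refine ⟨max (F.sup' hne M) 0, le_max_right _ _, fun u hu => ?_⟩
  have := hcover hu
  simp only [Set.mem_iUnion, Metric.mem_ball, exists_prop] at this
  obtain ⟨t, htF, hdist⟩ := this
  rw [Real.dist_eq] at hdist
  have h1 : |f u| ≤ M t := hM t (hF t htF) u hu hdist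
  exact h1.trans ((Finset.le_sup' M htF).trans (le_max_left _ _))

lemma lml_abs_le {f : ℝ → ℝ} (hf : Cadlag f) {M b : ℝ} (hM0 : 0 ≤ M)
    (hM : ∀ t ∈ Icc (0:ℝ) b, |f t| ≤ M) : ∀ z ∈ Icc (0:ℝ) b, |lml f z| ≤ M := by
  intro z hz
  rcases eq_or_lt_of_le hz.1 with h0 | h0
  · simp [lml, ← h0, hM0]
  · have hl := cadlag_tendsto_lml hf h0
    have hev : ∀ᶠ u in 𝓝[<] z, |f u| ≤ M := by
      filter_upwards [Ioo_mem_nhdsLT_of_mem (show z ∈ Ioc (0:ℝ) z from ⟨h0, le_rfl⟩)] with u hu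
      exact hM u ⟨hu.1.le, hu.2.le.trans hz.2⟩
    exact le_of_tendsto (hl.abs) hev

lemma hbdd (h₁ : Cadlag f₁) (h₂ : Cadlag f₂) (b : ℝ) : BddAbove (hh f₁ f₂ '' Icc 0 b) := by
  obtain ⟨M₁, hM₁0, hM₁⟩ := cadlag_abs_bdd h₁ b
  obtain ⟨M₂, hM₂0, hM₂⟩ := cadlag_abs_bdd h₂ b
  have hL := lml_abs_le h₁ hM₁0 hM₁
  refine ⟨M₂ + M₁, ?_⟩
  rintro _ ⟨z, hz, rfl⟩
  have hb1 : f₂ z ≤ M₂ := (abs_le.mp (hM₂ z hz)).2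
  have hb2 : -M₁ ≤ lml f₁ z := (abs_le.mp (hL z hz)).1
  simp only [hh]
  linarith

lemma hbdd' (h₁ : Cadlag f₁) (h₂ : Cadlag f₂) {A : Set ℝ} {b : ℝ} (hA : A ⊆ Icc 0 b) :
    BddAbove (hh f₁ f₂ '' A) :=
  (hbdd h₁ h₂ b).mono (image_mono hA)

lemma hh0_nonneg (hj₂ : NonnegJumps f₂) : 0 ≤ hh f₁ f₂ 0 := by
  have := hj₂ 0 le_rfl
  simp only [lml, if_pos le_rfl] at this
  simpa [hh, lml] using this

lemma ss_nonneg (h₁ : Cadlag f₁) (h₂ : Cadlag f₂) (hj₂ : NonnegJumps f₂)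
    {t : ℝ} (ht : 0 ≤ t) : 0 ≤ ss f₁ f₂ t :=
  (hh0_nonneg hj₂).trans (le_csSup (hbdd h₁ h₂ t) ⟨0, ⟨le_rfl, ht⟩, rfl⟩)

lemma ss_of_neg {t : ℝ} (ht : t < 0) : ss f₁ f₂ t = 0 := by
  rw [ss_def, Icc_eq_empty (not_le.mpr ht), image_empty, Real.sSup_empty]

lemma ss_mono (h₁ : Cadlag f₁) (h₂ : Cadlag f₂) (hj₂ : NonnegJumps f₂) :
    Monotone (ss f₁ f₂) := by
  intro t t' htt'
  rcases lt_or_ge t' 0 with h' | h'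
  · rw [ss_of_neg (htt'.trans_lt h'), ss_of_neg h']
  rcases lt_or_ge t 0 with h | h
  · rw [ss_of_neg h]; exact ss_nonneg h₁ h₂ hj₂ h'
  · exact csSup_le_csSup (hbdd h₁ h₂ t') ((nonempty_Icc.mpr h).image _)
      (image_mono (Icc_subset_Icc_right htt'))

lemma hh_le_ss (h₁ : Cadlag f₁) (h₂ : Cadlag f₂) {z : ℝ} (hz : 0 ≤ z) :
    hh f₁ f₂ z ≤ ss f₁ f₂ z :=
  le_csSup (hbdd h₁ h₂ z) ⟨z, ⟨hz, le_rfl⟩, rfl⟩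

end aux

section aux2
variable {f₁ f₂ : ℝ → ℝ} (h₁ : Cadlag f₁) (h₂ : Cadlag f₂) (hj₂ : NonnegJumps f₂)
include h₁ h₂ hj₂

lemma lml_ss_le {z : ℝ} (hz : 0 ≤ z) : lml (ss f₁ f₂) z ≤ ss f₁ f₂ z := by
  rcases eq_or_lt_of_le hz with h0 | h0
  · rw [lml, if_pos (le_of_eq h0.symm)]
    exact ss_nonneg h₁ h₂ hj₂ hz
  · rw [lml, if_neg (not_le.mpr h0)]
    exact (ss_mono h₁ h₂ hj₂).leftLim_le le_rfl

lemma ss_le_lml_ss {w z : ℝ} (hwz : w < z) : ss f₁ f₂ w ≤ lml (ss f₁ f₂) z := by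
  rcases le_or_gt z 0 with h0 | h0
  · rw [lml, if_pos h0, ss_of_neg (hwz.trans_le h0)]
  · rw [lml, if_neg (not_le.mpr h0)]
    exact (ss_mono h₁ h₂ hj₂).le_leftLim hwz

lemma lml_ss_mono {u z : ℝ} (huz : u ≤ z) : lml (ss f₁ f₂) u ≤ lml (ss f₁ f₂) z := by
  rcases le_or_gt u 0 with h0 | h0
  · rw [lml, if_pos h0]
    rcases le_or_gt z 0 with h0' | h0'
    · rw [lml, if_pos h0']
    · calc (0:ℝ) ≤ ss f₁ f₂ 0 := ss_nonneg h₁ h₂ hj₂ le_rfl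
        _ ≤ lml (ss f₁ f₂) z := ss_le_lml_ss h₁ h₂ hj₂ h0'
  · rw [lml, if_neg (not_le.mpr h0), lml, if_neg (not_le.mpr (h0.trans_le huz))]
    exact (ss_mono h₁ h₂ hj₂).leftLim huz

lemma lml_ss_nonneg {z : ℝ} : 0 ≤ lml (ss f₁ f₂) z := by
  rcases le_or_gt z 0 with h0 | h0
  · rw [lml, if_pos h0]
  · calc (0:ℝ) ≤ ss f₁ f₂ 0 := ss_nonneg h₁ h₂ hj₂ le_rfl
      _ ≤ lml (ss f₁ f₂) z := ss_le_lml_ss h₁ h₂ hj₂ h0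

lemma tendsto_lml_ss {z : ℝ} (hz : 0 < z) :
    Tendsto (ss f₁ f₂) (𝓝[<] z) (𝓝 (lml (ss f₁ f₂) z)) := by
  rw [lml, if_neg (not_le.mpr hz)]
  exact (ss_mono h₁ h₂ hj₂).tendsto_leftLim z

lemma lml_Wp1 {z : ℝ} (hz : 0 ≤ z) :
    lml (fun t => f₁ t + ss f₁ f₂ t) z = lml f₁ z + lml (ss f₁ f₂) z := by
  rcases eq_or_lt_of_le hz with h0 | h0
  · simp [lml, ← h0]
  · rw [lml, if_neg (not_le.mpr h0)]
    exact leftLim_eq_of_tendsto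
      ((cadlag_tendsto_lml h₁ h0).add (tendsto_lml_ss h₁ h₂ hj₂ h0))

lemma lml_Wp2 {z : ℝ} (hz : 0 ≤ z) :
    lml (fun t => f₂ t - ss f₁ f₂ t) z = lml f₂ z - lml (ss f₁ f₂) z := by
  rcases eq_or_lt_of_le hz with h0 | h0
  · simp [lml, ← h0]
  · rw [lml, if_neg (not_le.mpr h0)]
    exact leftLim_eq_of_tendsto
      ((cadlag_tendsto_lml h₂ h0).sub (tendsto_lml_ss h₁ h₂ hj₂ h0))

end aux2

section aux3
variable {f₁ f₂ : ℝ → ℝ}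

lemma hh_right_control (h₁ : Cadlag f₁) (h₂ : Cadlag f₂) (hj₁ : NonnegJumps f₁)
    {t : ℝ} (ht : 0 ≤ t) {ε : ℝ} (hε : 0 < ε) :
    ∃ δ > (0:ℝ), ∀ z ∈ Ioc t (t + δ), hh f₁ f₂ z ≤ hh f₁ f₂ t + ε := by
  have hrc₂ := h₂.1 t ht
  rw [ContinuousWithinAt, Metric.tendsto_nhdsWithin_nhds] at hrc₂
  obtain ⟨δ₁, hδ₁, hd₂⟩ := hrc₂ (ε/2) (by positivity)
  have hrc₁ := h₁.1 t ht
  rw [ContinuousWithinAt, Metric.tendsto_nhdsWithin_nhds] at hrc₁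
  obtain ⟨δ₂, hδ₂, hd₁⟩ := hrc₁ (ε/2) (by positivity)
  refine ⟨min δ₁ δ₂ / 2, by positivity, fun z hz => ?_⟩
  have hzt : t < z := hz.1
  have hz1 : z - t < δ₁ := by
    have := hz.2; have := min_le_left δ₁ δ₂; linarith
  have hz2 : z - t < δ₂ := by
    have := hz.2; have := min_le_right δ₁ δ₂; linarith
  -- f₂ z ≤ f₂ t + ε/2
  have hf₂ : f₂ z ≤ f₂ t + ε / 2 := by
    have := hd₂ (le_of_lt hzt) (by rw [Real.dist_eq, abs_of_pos (by linarith)]; linarith)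
    rw [Real.dist_eq] at this
    have := (abs_lt.mp this).2; linarith
  -- lml f₁ z ≥ f₁ t - ε/2
  have hf₁ : f₁ t - ε / 2 ≤ lml f₁ z := by
    have hz0 : 0 < z := lt_of_le_of_lt ht hzt
    have hl := cadlag_tendsto_lml h₁ hz0
    refine ge_of_tendsto hl ?_
    filter_upwards [Ioo_mem_nhdsLT_of_mem (show z ∈ Ioc t z from ⟨hzt, le_rfl⟩)] with u hu
    have := hd₁ (le_of_lt hu.1) (by
      rw [Real.dist_eq, abs_of_pos (by linarith [hu.1, hu.2])]
      linarith [hu.2, hz2])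
    rw [Real.dist_eq] at this
    have := (abs_lt.mp this).1; linarith
  have hjump : lml f₁ t ≤ f₁ t := hj₁ t ht
  simp only [hh]
  linarith

end aux3

theorem stmt4 (f₁ f₂ : ℝ → ℝ) (h₁ : Cadlag f₁) (h₂ : Cadlag f₂)
    (hj₁ : NonnegJumps f₁) (hj₂ : NonnegJumps f₂)
    (x y : ℝ) (hx : 0 ≤ x) (hxy : x ≤ y) :
    f₁ y - lml f₂ x + S f₁ f₂ x y
      = Wp1 f₁ f₂ y - lml (Wp2 f₁ f₂) x + S (Wp1 f₁ f₂) (Wp2 f₁ f₂) x y := by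
  set h : ℝ → ℝ := hh f₁ f₂ with hh_def
  set s : ℝ → ℝ := ss f₁ f₂ with hs_def
  set H : ℝ → ℝ := fun z => h z - s z - lml s z with hH_def
  set a : ℝ := lml s x with ha_def
  set Sxy : ℝ := S f₁ f₂ x y with hSxy_def
  set T : ℝ := sSup (H '' Icc x y) with hT_def
  have hy0 : (0:ℝ) ≤ y := hx.trans hxy
  have neXY : (Icc x y).Nonempty := nonempty_Icc.mpr hxy
  have bddXY : BddAbove (h '' Icc x y) := hbdd' h₁ h₂ (Icc_subset_Icc hx le_rfl)
  have hSxy_eq : Sxy = sSup (h '' Icc x y) := rfl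
  have ha0 : 0 ≤ a := lml_ss_nonneg h₁ h₂ hj₂
  -- rewrite the RHS pieces
  have hW1y : Wp1 f₁ f₂ y = f₁ y + s y := rfl
  have hW2x : lml (Wp2 f₁ f₂) x = lml f₂ x - a := lml_Wp2 h₁ h₂ hj₂ hx
  have hTeq : S (Wp1 f₁ f₂) (Wp2 f₁ f₂) x y = T := by
    rw [hT_def, S]
    congr 1
    apply image_congr
    intro z hz
    have hz0 : 0 ≤ z := hx.trans hz.1
    have e1 : lml (Wp1 f₁ f₂) z = lml f₁ z + lml s z := lml_Wp1 h₁ h₂ hj₂ hz0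
    rw [e1, hH_def]
    simp only [Wp2, hh_def, hh, hs_def, ss]
    ring
  -- upper bound for H on [x,y]
  have hub : ∀ z ∈ Icc x y, H z ≤ Sxy - s y - a := by
    intro z hz
    have hz0 : 0 ≤ z := hx.trans hz.1
    have step1 : a ≤ lml s z := lml_ss_mono h₁ h₂ hj₂ hz.1
    have step2a : h z ≤ s z := hh_le_ss h₁ h₂ hz0
    have step2b : h z ≤ Sxy := le_csSup bddXY ⟨z, hz, rfl⟩
    have step3 : s y ≤ max (s z) Sxy := by
      refine csSup_le ((nonempty_Icc.mpr hy0).image _) ?_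
      rintro _ ⟨w, hw, rfl⟩
      rcases le_or_gt w z with hwz | hwz
      · exact le_max_of_le_left ((hh_le_ss h₁ h₂ hw.1).trans (ss_mono h₁ h₂ hj₂ hwz))
      · exact le_max_of_le_right (le_csSup bddXY ⟨w, ⟨hz.1.trans hwz.le, hw.2⟩, rfl⟩)
    have key : h z + s y ≤ Sxy + s z := by
      rcases le_total (s z) Sxy with hc | hc
      · rw [max_eq_right hc] at step3; linarith
      · rw [max_eq_left hc] at step3; linarith
    simp only [hH_def]
    linarith
  have hTbdd : BddAbove (H '' Icc x y) := by
    refine ⟨Sxy - s y - a, ?_⟩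
    rintro _ ⟨z, hz, rfl⟩
    exact hub z hz
  have hTle : T ≤ Sxy - s y - a := csSup_le (neXY.image _) (by rintro _ ⟨z, hz, rfl⟩; exact hub z hz)
  have hTge : Sxy - s y - a ≤ T := by
    rcases le_or_gt Sxy a with hA | hB
    · -- degenerate case: s is flat equal to a on [x,y]
      have hflat : ∀ z ∈ Icc x y, s z = a ∧ lml s z = a := by
        intro z hz
        have hsz_le : s z ≤ a := by
          refine csSup_le ((nonempty_Icc.mpr (hx.trans hz.1)).image _) ?_
          rintro _ ⟨w, hw, rfl⟩
          rcases lt_or_ge w x with hwx | hwx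
          · exact (hh_le_ss h₁ h₂ hw.1).trans (ss_le_lml_ss h₁ h₂ hj₂ hwx)
          · exact (le_csSup bddXY ⟨w, ⟨hwx, hw.2.trans hz.2⟩, rfl⟩).trans hA
        have hsz_ge : a ≤ s z := (lml_ss_mono h₁ h₂ hj₂ hz.1).trans (lml_ss_le h₁ h₂ hj₂ (hx.trans hz.1))
        have h1 : s z = a := le_antisymm hsz_le hsz_ge
        refine ⟨h1, le_antisymm ?_ (lml_ss_mono h₁ h₂ hj₂ hz.1)⟩
        exact (lml_ss_le h₁ h₂ hj₂ (hx.trans hz.1)).trans h1.le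
      have hsya : s y = a := (hflat y ⟨hxy, le_rfl⟩).1
      have : Sxy ≤ T + 2 * a := by
        refine csSup_le (neXY.image _) ?_
        rintro _ ⟨w, hw, rfl⟩
        have hHw : H w ≤ T := le_csSup hTbdd ⟨w, hw, rfl⟩
        have e1 := (hflat w hw).1
        have e2 := (hflat w hw).2
        simp only [hH_def] at hHw
        show h w ≤ T + 2 * a
        linarith
      rw [hsya]; linarith
    · -- main case
      have hsy : s y = Sxy := by
        refine le_antisymm ?_ (csSup_le_csSup (hbdd h₁ h₂ y) (neXY.image _)
          (image_mono (Icc_subset_Icc hx le_rfl)))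
        refine csSup_le ((nonempty_Icc.mpr hy0).image _) ?_
        rintro _ ⟨w, hw, rfl⟩
        rcases lt_or_ge w x with hwx | hwx
        · exact ((hh_le_ss h₁ h₂ hw.1).trans (ss_le_lml_ss h₁ h₂ hj₂ hwx)).trans hB.le
        · exact le_csSup bddXY ⟨w, ⟨hwx, hw.2⟩, rfl⟩
      rw [hsy]
      have key : ∀ ε : ℝ, 0 < ε → -a ≤ T + ε := by
        intro ε hε
        set ε' : ℝ := min (ε/4) ((Sxy - a)/2) with hε'_def
        have hε'pos : 0 < ε' := lt_min (by linarith) (by linarith)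
        have hε'le : ε' ≤ ε/4 := min_le_left _ _
        set c : ℝ := a + ε' with hc_def
        have hca : a < c := by simp only [hc_def]; linarith
        have hcS : c < Sxy := by
          have : ε' ≤ (Sxy - a)/2 := min_le_right _ _
          simp only [hc_def]; linarith
        have hc0 : 0 < c := lt_of_le_of_lt ha0 hca
        set AA : Set ℝ := {z | z ∈ Icc x y ∧ c < s z} with hAA_def
        have hyAA : y ∈ AA := ⟨⟨hxy, le_rfl⟩, by rw [hsy]; exact hcS⟩
        have hAAne : AA.Nonempty := ⟨y, hyAA⟩
        have hAAbdd : BddBelow AA := ⟨x, fun z hz => hz.1.1⟩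
        set t0 : ℝ := sInf AA with ht0_def
        have ht0x : x ≤ t0 := le_csInf hAAne (fun z hz => hz.1.1)
        have ht0y : t0 ≤ y := csInf_le hAAbdd hyAA
        have ht00 : 0 ≤ t0 := hx.trans ht0x
        have hlow : ∀ w, w < t0 → s w ≤ c := by
          intro w hw
          rcases lt_or_ge w x with hwx | hwx
          · exact (ss_le_lml_ss h₁ h₂ hj₂ hwx).trans hca.le
          · by_contra hcon
            push_neg at hcon
            have : t0 ≤ w := csInf_le hAAbdd ⟨⟨hwx, hw.le.trans ht0y⟩, hcon⟩
            exact absurd hw (not_lt.mpr this)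
        have hσt0 : lml s t0 ≤ c := by
          rcases eq_or_lt_of_le ht00 with h0 | h0
          · rw [ha_def] at *
            rw [lml, if_pos (le_of_eq h0.symm)]
            exact hc0.le
          · refine le_of_tendsto (tendsto_lml_ss h₁ h₂ hj₂ h0) ?_
            filter_upwards [self_mem_nhdsWithin] with w hw using hlow w hw
        have hfound : ∃ z ∈ Icc x y, -a - ε ≤ H z := by
          rcases lt_or_ge c (s t0) with hi | hii
          · -- subcase (i): sup jumps at t0
            have hle : s t0 ≤ max (lml s t0) (h t0) := by
              refine csSup_le ((nonempty_Icc.mpr ht00).image _) ?_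
              rintro _ ⟨w, hw, rfl⟩
              rcases eq_or_lt_of_le hw.2 with hwt | hwt
              · rw [hwt]; exact le_max_right _ _
              · exact le_max_of_le_left ((hh_le_ss h₁ h₂ hw.1).trans (ss_le_lml_ss h₁ h₂ hj₂ hwt))
            have hht0 : s t0 ≤ h t0 := by
              rcases le_total (lml s t0) (h t0) with hmx | hmx
              · rwa [max_eq_right hmx] at hle
              · rw [max_eq_left hmx] at hle; linarith
            have hht0' : h t0 ≤ s t0 := hh_le_ss h₁ h₂ ht00
            refine ⟨t0, ⟨ht0x, ht0y⟩, ?_⟩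
            have : H t0 = - lml s t0 := by simp only [hH_def]; linarith
            rw [this]
            have : c ≤ a + ε := by simp only [hc_def]; linarith
            linarith
          · -- subcase (ii)
            obtain ⟨δ, hδ, hctrl⟩ := hh_right_control h₁ h₂ hj₁ ht00 (show (0:ℝ) < ε/4 by linarith)
            have hz₁ : ∃ z₁ ∈ AA, z₁ < t0 + δ := by
              by_contra hcon
              push_neg at hcon
              have : t0 + δ ≤ t0 := le_csInf hAAne hcon
              linarith
            obtain ⟨z₁, hz₁AA, hz₁lt⟩ := hz₁
            have hz₁t0 : t0 < z₁ := by
              rcases eq_or_lt_of_le (csInf_le hAAbdd hz₁AA) with heq | hlt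
              · have : c < s t0 := by rw [ht0_def, heq]; exact hz₁AA.2
                linarith
              · exact hlt
            have hz₁0 : (0:ℝ) ≤ z₁ := ht00.trans hz₁t0.le
            obtain ⟨_, ⟨w, hw01, rfl⟩, hcw⟩ :=
              exists_lt_of_lt_csSup ((nonempty_Icc.mpr hz₁0).image _) hz₁AA.2
            have hwt0 : t0 < w := by
              by_contra hcon
              push_neg at hcon
              have : h w ≤ c := ((hh_le_ss h₁ h₂ hw01.1).trans
                ((ss_mono h₁ h₂ hj₂ hcon).trans hii))
              exact absurd hcw (not_lt.mpr this)
            have hwδ : w ≤ t0 + δ := hw01.2.trans hz₁lt.le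
            have hsw : s w ≤ c + ε/4 := by
              refine csSup_le ((nonempty_Icc.mpr (ht00.trans hwt0.le)).image _) ?_
              rintro _ ⟨v, hv, rfl⟩
              rcases le_or_gt v t0 with hvt | hvt
              · exact ((hh_le_ss h₁ h₂ hv.1).trans ((ss_mono h₁ h₂ hj₂ hvt).trans hii)).trans
                  (by linarith)
              · have hcv := hctrl v ⟨hvt, hv.2.trans hwδ⟩
                have hht0s : hh f₁ f₂ t0 ≤ s t0 := hh_le_ss h₁ h₂ ht00
                show hh f₁ f₂ v ≤ c + ε/4
                linarith
            have hσw : lml s w ≤ c + ε/4 :=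
              (lml_ss_le h₁ h₂ hj₂ (ht00.trans hwt0.le)).trans hsw
            refine ⟨w, ⟨ht0x.trans hwt0.le, hw01.2.trans hz₁AA.1.2⟩, ?_⟩
            have hcae : c ≤ a + ε/4 := by simp only [hc_def]; linarith
            have hcw' : c < h w := hcw
            simp only [hH_def]
            linarith
        obtain ⟨z, hz, hHz⟩ := hfound
        have : H z ≤ T := le_csSup hTbdd ⟨z, hz, rfl⟩
        linarith
      have : -a ≤ T := le_of_forall_pos_le_add key
      linarith
  have hTfin : T = Sxy - s y - a := le_antisymm hTle hTge
  rw [hTeq, hW1y, hW2x, hTfin]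
  ring
end

section
/- Let f₁, f₂ : [0,∞) → ℝ be cadlag with nonnegative jumps and f₁(0⁻)=f₂(0⁻)=0, and let W(f₁,f₂)=(g₁,g₂) be the Pitman transform (g₁(t)=f₁(t)+s(0,t), g₂(t)=f₂(t)-s(0,t) with s(x,y)=sup_{z∈[x,y]}(f₂(z)-f₁(z⁻))). Then the following are equivalent: (i) g₁ = f₁; (ii) g₂ = f₂; (iii) (g₁,g₂) = (f₁,f₂); (iv) f₂(t) ≤ f₁(t⁻) for all t. -/
open Filter Set
open Topology

/-- A cadlag function is bounded on compact intervals `[0, t]`. -/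
lemma cadlag_bdd (f : ℝ → ℝ) (hf : Cadlag f) (t : ℝ) :
    ∃ M : ℝ, 0 ≤ M ∧ ∀ z ∈ Set.Icc (0:ℝ) t, |f z| ≤ M := by
  have key : ∃ M : ℝ, ∀ z ∈ Set.Icc (0:ℝ) t, |f z| ≤ M := by
    have := (isCompact_Icc (a := (0:ℝ)) (b := t)).induction_on
      (p := fun s => ∃ M : ℝ, ∀ z ∈ s, |f z| ≤ M)
      ⟨0, by simp⟩
      (fun s s' hss ⟨M, hM⟩ => ⟨M, fun z hz => hM z (hss hz)⟩)
      (fun s s' ⟨M, hM⟩ ⟨M', hM'⟩ => ⟨max M M', fun z hz => by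
        rcases hz with hz | hz
        · exact (hM z hz).trans (le_max_left _ _)
        · exact (hM' z hz).trans (le_max_right _ _)⟩)
      ?_
    · exact this
    intro x hx
    have hx0 : (0:ℝ) ≤ x := hx.1
    have hR : ∀ᶠ z in 𝓝[Set.Ici x] x, |f z| ≤ |f x| + 1 := by
      have h := hf.1 x hx0
      have h' := h (Metric.ball_mem_nhds (f x) one_pos)
      filter_upwards [h'] with z hz
      have : |f z - f x| < 1 := by simpa [Real.dist_eq] using hz
      calc |f z| ≤ |f z - f x| + |f x| := by
            simpa using abs_add_le (f z - f x) (f x)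
        _ ≤ |f x| + 1 := by linarith
    rcases eq_or_lt_of_le hx0 with h0 | hxpos
    · -- x = 0
      have hmem : Set.Icc (0:ℝ) t ⊆ Set.Ici x := fun z hz => by
        simp [← h0] at hz ⊢; exact hz.1
      have : ∀ᶠ z in 𝓝[Set.Icc (0:ℝ) t] x, |f z| ≤ |f x| + 1 :=
        hR.filter_mono (nhdsWithin_mono x hmem)
      rcases this.exists_mem with ⟨U, hU, hUb⟩
      exact ⟨U, hU, |f x| + 1, hUb⟩
    · obtain ⟨l, hl⟩ := hf.2 x hxpos
      have hL : ∀ᶠ z in 𝓝[Set.Iio x] x, |f z| ≤ |l| + 1 := by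
        have h' := hl (Metric.ball_mem_nhds l one_pos)
        filter_upwards [h'] with z hz
        have : |f z - l| < 1 := by simpa [Real.dist_eq] using hz
        calc |f z| ≤ |f z - l| + |l| := by simpa using abs_add_le (f z - l) l
          _ ≤ |l| + 1 := by linarith
      have hall : ∀ᶠ z in 𝓝 x, |f z| ≤ max (|f x| + 1) (|l| + 1) := by
        rw [← nhdsLT_sup_nhdsGE x, eventually_sup]
        constructor
        · exact hL.mono fun z hz => hz.trans (le_max_right _ _)
        · exact hR.mono fun z hz => hz.trans (le_max_left _ _)
      have : ∀ᶠ z in 𝓝[Set.Icc (0:ℝ) t] x, |f z| ≤ max (|f x| + 1) (|l| + 1) :=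
        hall.filter_mono nhdsWithin_le_nhds
      rcases this.exists_mem with ⟨U, hU, hUb⟩
      exact ⟨U, hU, _, hUb⟩
  rcases key with ⟨M, hM⟩
  exact ⟨max M 0, le_max_right _ _, fun z hz => (hM z hz).trans (le_max_left _ _)⟩

/-- `lml f` is bounded on `[0, t]` by any bound of `f`. -/
lemma lml_bdd (f : ℝ → ℝ) (hf : Cadlag f) {t M : ℝ} (hM : 0 ≤ M)
    (hb : ∀ z ∈ Set.Icc (0:ℝ) t, |f z| ≤ M) :
    ∀ z ∈ Set.Icc (0:ℝ) t, |lml f z| ≤ M := by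
  intro z hz
  rcases le_or_gt z 0 with hz0 | hz0
  · simp [lml, hz0, hM]
  · rw [lml, if_neg (not_le.2 hz0)]
    obtain ⟨l, hl⟩ := hf.2 z hz0
    rw [leftLim_eq_of_tendsto hl]
    have hev : ∀ᶠ w in 𝓝[Set.Iio z] z, |f w| ≤ M := by
      have hIoo : Set.Ioo (0:ℝ) z ∈ 𝓝[Set.Iio z] z :=
        Ioo_mem_nhdsLT_of_mem ⟨hz0, le_refl z⟩
      filter_upwards [hIoo] with w hw
      exact hb w ⟨hw.1.le, hw.2.le.trans hz.2⟩
    exact le_of_tendsto (hl.abs) hev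

/-- Under condition (iv), the set defining `S` is bounded above by `0`. -/
lemma S_eq_zero (f₁ f₂ : ℝ → ℝ) (hj₂ : NonnegJumps f₂)
    (hD : ∀ t : ℝ, 0 ≤ t → f₂ t ≤ lml f₁ t) {t : ℝ} (ht : 0 ≤ t) :
    S f₁ f₂ 0 t = 0 := by
  have hub : ∀ y ∈ (fun z => f₂ z - lml f₁ z) '' Set.Icc 0 t, y ≤ 0 := by
    rintro y ⟨z, hz, rfl⟩
    have := hD z hz.1
    simp only []
    linarith
  have h0mem : f₂ 0 - lml f₁ 0 ∈ (fun z => f₂ z - lml f₁ z) '' Set.Icc 0 t :=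
    ⟨0, ⟨le_refl 0, ht⟩, rfl⟩
  have hf20 : 0 ≤ f₂ 0 := by
    have := hj₂ 0 le_rfl
    simpa [lml] using this
  have hle : S f₁ f₂ 0 t ≤ 0 := Real.sSup_le hub le_rfl
  have hge : 0 ≤ S f₁ f₂ 0 t := by
    have : f₂ 0 - lml f₁ 0 ≤ S f₁ f₂ 0 t :=
      le_csSup ⟨0, hub⟩ h0mem
    simp [lml] at this
    linarith
  linarith

/-- Converse direction: from `S = 0` deduce condition (iv). -/
lemma cond_of_S (f₁ f₂ : ℝ → ℝ) (h₁ : Cadlag f₁) (h₂ : Cadlag f₂)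
    (hS : ∀ t : ℝ, 0 ≤ t → S f₁ f₂ 0 t = 0) :
    ∀ t : ℝ, 0 ≤ t → f₂ t ≤ lml f₁ t := by
  intro t ht
  obtain ⟨M₁, hM₁0, hM₁⟩ := cadlag_bdd f₁ h₁ t
  obtain ⟨M₂, _, hM₂⟩ := cadlag_bdd f₂ h₂ t
  have hlml := lml_bdd f₁ h₁ hM₁0 hM₁
  have hbdd : BddAbove ((fun z => f₂ z - lml f₁ z) '' Set.Icc 0 t) := by
    refine ⟨M₂ + M₁, ?_⟩
    rintro y ⟨z, hz, rfl⟩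
    have h1 := hM₂ z hz
    have h2 := hlml z hz
    have := abs_le.1 h1
    have := abs_le.1 h2
    simp only []
    linarith [(abs_le.1 h1).2, (abs_le.1 h2).1]
  have hmem : f₂ t - lml f₁ t ∈ (fun z => f₂ z - lml f₁ z) '' Set.Icc 0 t :=
    ⟨t, ⟨ht, le_rfl⟩, rfl⟩
  have := le_csSup hbdd hmem
  rw [show sSup ((fun z => f₂ z - lml f₁ z) '' Set.Icc 0 t) = S f₁ f₂ 0 t from rfl,
    hS t ht] at this
  linarith

theorem stmt5 (f₁ f₂ : ℝ → ℝ) (h₁ : Cadlag f₁) (h₂ : Cadlag f₂)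
    (hj₁ : NonnegJumps f₁) (hj₂ : NonnegJumps f₂) :
    ((∀ t : ℝ, 0 ≤ t → Wp1 f₁ f₂ t = f₁ t) ↔ (∀ t : ℝ, 0 ≤ t → f₂ t ≤ lml f₁ t)) ∧
    ((∀ t : ℝ, 0 ≤ t → Wp2 f₁ f₂ t = f₂ t) ↔ (∀ t : ℝ, 0 ≤ t → f₂ t ≤ lml f₁ t)) ∧
    ((∀ t : ℝ, 0 ≤ t → Wp1 f₁ f₂ t = f₁ t ∧ Wp2 f₁ f₂ t = f₂ t) ↔
      (∀ t : ℝ, 0 ≤ t → f₂ t ≤ lml f₁ t)) := by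
  have key1 : (∀ t : ℝ, 0 ≤ t → Wp1 f₁ f₂ t = f₁ t) ↔ (∀ t : ℝ, 0 ≤ t → f₂ t ≤ lml f₁ t) := by
    constructor
    · intro h
      refine cond_of_S f₁ f₂ h₁ h₂ (fun t ht => ?_)
      have := h t ht
      simp only [Wp1] at this
      linarith
    · intro hD t ht
      simp only [Wp1, S_eq_zero f₁ f₂ hj₂ hD ht, add_zero]
  have key2 : (∀ t : ℝ, 0 ≤ t → Wp2 f₁ f₂ t = f₂ t) ↔ (∀ t : ℝ, 0 ≤ t → f₂ t ≤ lml f₁ t) := by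
    constructor
    · intro h
      refine cond_of_S f₁ f₂ h₁ h₂ (fun t ht => ?_)
      have := h t ht
      simp only [Wp2] at this
      linarith
    · intro hD t ht
      simp only [Wp2, S_eq_zero f₁ f₂ hj₂ hD ht, sub_zero]
  refine ⟨key1, key2, ?_⟩
  constructor
  · intro h
    exact key1.1 fun t ht => (h t ht).1
  · intro hD t ht
    exact ⟨key1.2 hD t ht, key2.2 hD t ht⟩
end

section
/- Let f₁, f₂ be cadlag with nonnegative jumps, s(x,y) = sup_{z∈[x,y]}(f₂(z)-f₁(z⁻)), and r(z) = s(z,z) - s(0,z) - s(0,z⁻). For x ≤ y, let I_f(x,y) = {z ∈ [x,y] : s(z,z) = s(x,y)} and I_W(x,y) = {z ∈ [x,y] : r(z) = sup_{w∈[x,y]} r(w)}. Then inf I_W(x,y) ≤ inf I_f(x,y) and sup I_W(x,y) ≤ sup I_f(x,y). -/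
open Filter Set Function Topology

/-- `r z = s(z,z) - s(0,z) - s(0,z⁻)`. -/
noncomputable def rW (f₁ f₂ : ℝ → ℝ) (z : ℝ) : ℝ :=
  S f₁ f₂ z z - S f₁ f₂ 0 z - Sm f₁ f₂ 0 z

lemma cadlag_left_tendsto {f : ℝ → ℝ} (h : Cadlag f) {c : ℝ} (hc : 0 < c) :
    Tendsto f (𝓝[<] c) (𝓝 (lml f c)) := by
  obtain ⟨l, hl⟩ := h.2 c hc
  rw [lml, if_neg (not_le.2 hc), leftLim_eq_of_tendsto hl]
  exact hl

lemma lml_tendsto_right_s7 {f : ℝ → ℝ} (h : Cadlag f) {c : ℝ} (hc : 0 ≤ c) :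
    Tendsto (lml f) (𝓝[>] c) (𝓝 (f c)) := by
  rw [Metric.tendsto_nhdsWithin_nhds]
  intro ε hε
  have hrc : Tendsto f (𝓝[Set.Ici c] c) (𝓝 (f c)) := h.1 c hc
  rw [Metric.tendsto_nhdsWithin_nhds] at hrc
  obtain ⟨δ, hδ, hδ'⟩ := hrc (ε/2) (by linarith)
  refine ⟨δ, hδ, ?_⟩
  intro w hw hwd
  have hcw : c < w := hw
  have hw0 : 0 < w := lt_of_le_of_lt hc hcw
  obtain ⟨l, hl⟩ := h.2 w hw0
  rw [lml, if_neg (not_le.2 hw0), leftLim_eq_of_tendsto hl]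
  rw [Real.dist_eq, abs_of_pos (by linarith)] at hwd
  have hmem : l ∈ Metric.closedBall (f c) (ε/2) := by
    apply Metric.isClosed_closedBall.mem_of_tendsto hl
    filter_upwards [Ioo_mem_nhdsLT hcw] with u hu
    have hd : dist u c < δ := by
      rw [Real.dist_eq, abs_of_pos (by linarith [hu.1] : (0:ℝ) < u - c)]
      linarith [hu.2]
    exact Metric.mem_closedBall.2 (hδ' (le_of_lt hu.1) hd).le
  have := Metric.mem_closedBall.1 hmem
  calc dist l (f c) ≤ ε/2 := this
  _ < ε := by linarith

lemma lml_tendsto_left_s7 {f : ℝ → ℝ} (h : Cadlag f) {c : ℝ} (hc : 0 < c) :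
    Tendsto (lml f) (𝓝[<] c) (𝓝 (lml f c)) := by
  have hl := cadlag_left_tendsto h hc
  rw [Metric.tendsto_nhdsWithin_nhds] at hl ⊢
  intro ε hε
  obtain ⟨δ₀, hδ₀, hδ'⟩ := hl (ε/2) (by linarith)
  refine ⟨min δ₀ c, lt_min hδ₀ hc, ?_⟩
  intro w hw hwd
  have hwc : w < c := hw
  rw [Real.dist_eq, abs_of_neg (by linarith)] at hwd
  have hw0 : 0 < w := by
    have := min_le_right δ₀ c; linarith
  obtain ⟨l, hlw⟩ := h.2 w hw0
  rw [lml, if_neg (not_le.2 hw0), leftLim_eq_of_tendsto hlw]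
  have hmem : l ∈ Metric.closedBall (lml f c) (ε/2) := by
    apply Metric.isClosed_closedBall.mem_of_tendsto hlw
    filter_upwards [Ioo_mem_nhdsLT (show c - min δ₀ c < w by linarith)] with u hu
    have hd : dist u c < δ₀ := by
      rw [Real.dist_eq, abs_of_neg (by linarith [hu.2, hwc] : u - c < 0)]
      have := min_le_left δ₀ c
      linarith [hu.1]
    exact Metric.mem_closedBall.2 (hδ' (show u < c by linarith [hu.2]) hd).le
  have := Metric.mem_closedBall.1 hmem
  calc dist l (lml f c) ≤ ε/2 := this
  _ < ε := by linarith

lemma usc_exists_max {s : Set ℝ} (hs : IsCompact s) (hne : s.Nonempty) {f : ℝ → ℝ}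
    (hf : UpperSemicontinuousOn f s) : ∃ c ∈ s, ∀ z ∈ s, f z ≤ f c := by
  by_contra hcon
  push_neg at hcon
  have key : ∀ c : s, ∃ z ∈ s, f (c : ℝ) < f z := fun c => hcon c c.2
  choose zf hzs hzlt using key
  have husc : ∀ c : s, ∃ U : Set ℝ, IsOpen U ∧ (c:ℝ) ∈ U ∧ ∀ w ∈ U ∩ s, f w < f (zf c) := by
    intro c
    have h2 := hf c c.2 (f (zf c)) (hzlt c)
    rw [eventually_iff, mem_nhdsWithin] at h2
    obtain ⟨U, hUo, hcU, hU⟩ := h2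
    exact ⟨U, hUo, hcU, fun w hw => hU hw⟩
  choose U hUo hcU hUlt using husc
  obtain ⟨F, hF⟩ := hs.elim_finite_subcover U hUo (fun w hw => mem_iUnion.2 ⟨⟨w, hw⟩, hcU _⟩)
  have hFne : F.Nonempty := by
    obtain ⟨w, hw⟩ := hne
    obtain ⟨i, hiF, _⟩ := mem_iUnion₂.1 (hF hw)
    exact ⟨i, hiF⟩
  obtain ⟨i₀, hi₀, hmax⟩ := F.exists_max_image (fun i => f (zf i)) hFne
  obtain ⟨j, hjF, hj⟩ := mem_iUnion₂.1 (hF (hzs i₀))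
  exact absurd (hUlt j _ ⟨hj, hzs i₀⟩) (not_lt.2 (hmax j hjF))

lemma g_usc {f₁ f₂ : ℝ → ℝ} (h₁ : Cadlag f₁) (h₂ : Cadlag f₂)
    (hj₁ : NonnegJumps f₁) (hj₂ : NonnegJumps f₂) {a b : ℝ} (ha : 0 ≤ a) :
    UpperSemicontinuousOn (fun z => f₂ z - lml f₁ z) (Set.Icc a b) := by
  intro c hc y' hy'
  set g : ℝ → ℝ := fun z => f₂ z - lml f₁ z with hg
  have hc0 : 0 ≤ c := ha.trans hc.1
  have hev_right : ∀ᶠ z in 𝓝[>] c, g z < y' := by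
    have hGR : Tendsto g (𝓝[>] c) (𝓝 (f₂ c - f₁ c)) :=
      (Tendsto.mono_left (h₂.1 c hc0) (nhdsWithin_mono c Ioi_subset_Ici_self)).sub
        (lml_tendsto_right_s7 h₁ hc0)
    have : f₂ c - f₁ c < y' := by
      have := hj₁ c hc0
      simp only [hg] at hy'
      linarith
    exact hGR.eventually_lt_const this
  have hev_sing : ∀ᶠ z in 𝓝[{c}] c, g z < y' := by
    apply eventually_nhdsWithin_of_forall
    intro z hz
    rw [mem_singleton_iff] at hz
    rw [hz]; exact hy'
  have hev_left : ∀ᶠ z in 𝓝[Set.Icc a b ∩ Set.Iio c] c, g z < y' := by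
    rcases eq_or_lt_of_le hc0 with h0 | h0
    · have hemp : Set.Icc a b ∩ Set.Iio c = ∅ := by
        ext z
        simp only [mem_inter_iff, mem_Icc, mem_Iio, mem_empty_iff_false, iff_false, not_and]
        intro hz hzc
        linarith [hz.1]
      rw [hemp, nhdsWithin_empty]
      exact Filter.eventually_bot
    · have hGL : Tendsto g (𝓝[<] c) (𝓝 (lml f₂ c - lml f₁ c)) :=
        (cadlag_left_tendsto h₂ h0).sub (lml_tendsto_left_s7 h₁ h0)
      have hlt : lml f₂ c - lml f₁ c < y' := by
        have := hj₂ c hc0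
        simp only [hg] at hy'
        linarith
      exact (hGL.eventually_lt_const hlt).filter_mono
        (nhdsWithin_mono c inter_subset_right)
  have hsub : Set.Icc a b ⊆ (Set.Icc a b ∩ Set.Iio c) ∪ ({c} ∪ Set.Ioi c) := by
    intro z hz
    rcases lt_trichotomy z c with h | h | h
    · exact Or.inl ⟨hz, h⟩
    · exact Or.inr (Or.inl h)
    · exact Or.inr (Or.inr h)
  have hle : 𝓝[Set.Icc a b] c ≤
      𝓝[Set.Icc a b ∩ Set.Iio c] c ⊔ (𝓝[{c}] c ⊔ 𝓝[>] c) := by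
    calc 𝓝[Set.Icc a b] c ≤ 𝓝[(Set.Icc a b ∩ Set.Iio c) ∪ ({c} ∪ Set.Ioi c)] c :=
        nhdsWithin_mono c hsub
    _ = _ := by rw [nhdsWithin_union, nhdsWithin_union]
  exact Filter.Eventually.filter_mono hle
    (Filter.eventually_sup.2 ⟨hev_left, Filter.eventually_sup.2 ⟨hev_sing, hev_right⟩⟩)

lemma g_max {f₁ f₂ : ℝ → ℝ} (h₁ : Cadlag f₁) (h₂ : Cadlag f₂)
    (hj₁ : NonnegJumps f₁) (hj₂ : NonnegJumps f₂) {a b : ℝ} (ha : 0 ≤ a) (hab : a ≤ b) :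
    ∃ c ∈ Set.Icc a b, ∀ z ∈ Set.Icc a b,
      f₂ z - lml f₁ z ≤ f₂ c - lml f₁ c :=
  usc_exists_max isCompact_Icc (nonempty_Icc.2 hab) (g_usc h₁ h₂ hj₁ hj₂ ha)


theorem stmt7 (f₁ f₂ : ℝ → ℝ) (h₁ : Cadlag f₁) (h₂ : Cadlag f₂)
    (hj₁ : NonnegJumps f₁) (hj₂ : NonnegJumps f₂)
    (x y : ℝ) (hx : 0 ≤ x) (hxy : x ≤ y) :
    sInf {z | z ∈ Set.Icc x y ∧ rW f₁ f₂ z = sSup (rW f₁ f₂ '' Set.Icc x y)}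
      ≤ sInf {z | z ∈ Set.Icc x y ∧ S f₁ f₂ z z = S f₁ f₂ x y} ∧
    sSup {z | z ∈ Set.Icc x y ∧ rW f₁ f₂ z = sSup (rW f₁ f₂ '' Set.Icc x y)}
      ≤ sSup {z | z ∈ Set.Icc x y ∧ S f₁ f₂ z z = S f₁ f₂ x y} := by
  set g : ℝ → ℝ := fun z => f₂ z - lml f₁ z with hgdef
  have hy0 : 0 ≤ y := hx.trans hxy
  have S_diag : ∀ z : ℝ, S f₁ f₂ z z = g z := by
    intro z
    rw [S, Set.Icc_self, Set.image_singleton, csSup_singleton]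
  -- global max on [0,y]
  obtain ⟨c₀, hc₀m, hc₀⟩ := g_max h₁ h₂ hj₁ hj₂ (le_refl (0:ℝ)) hy0
  have hbdd : BddAbove (g '' Set.Icc 0 y) :=
    ⟨g c₀, by rw [upperBounds]; rintro w ⟨z, hz, rfl⟩; exact hc₀ z hz⟩
  have hbdds : ∀ s : Set ℝ, s ⊆ Set.Icc 0 y → BddAbove (g '' s) :=
    fun s hs => hbdd.mono (image_mono hs)
  -- max on [x,y]
  obtain ⟨c, hmax, hgc⟩ := g_max h₁ h₂ hj₁ hj₂ hx hxy
  have hSxy : S f₁ f₂ x y = g c := by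
    apply IsGreatest.csSup_eq
    constructor
    · exact mem_image_of_mem _ hmax
    · rintro w ⟨z, hz, rfl⟩; exact hgc z hz
  have g0 : 0 ≤ g 0 := by
    have h1 : lml f₁ 0 = 0 := if_pos le_rfl
    have h2 : lml f₂ 0 = 0 := if_pos le_rfl
    have := hj₂ 0 le_rfl
    simp only [hgdef, h1, sub_zero]
    rw [h2] at this
    linarith
  have Sm0_nonneg : ∀ z : ℝ, 0 ≤ z → z ≤ y → 0 ≤ Sm f₁ f₂ 0 z := by
    intro z hz hzy
    rcases eq_or_lt_of_le hz with h0 | h0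
    · rw [Sm, ← h0, Set.Ico_self, Set.image_empty, Real.sSup_empty]
    · exact g0.trans (le_csSup (hbdds _ (Set.Ico_subset_Icc_self.trans
        (Set.Icc_subset_Icc_right hzy))) (mem_image_of_mem _ ⟨le_rfl, h0⟩))
  have S0_ge_g : ∀ z : ℝ, 0 ≤ z → z ≤ y → g z ≤ S f₁ f₂ 0 z := by
    intro z hz hzy
    exact le_csSup (hbdds _ (Set.Icc_subset_Icc_right hzy)) (mem_image_of_mem _ ⟨hz, le_rfl⟩)
  have S0_mono : ∀ z z' : ℝ, 0 ≤ z → z ≤ z' → z' ≤ y → S f₁ f₂ 0 z ≤ S f₁ f₂ 0 z' := by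
    intro z z' hz hzz' hz'y
    exact csSup_le_csSup (hbdds _ (Set.Icc_subset_Icc_right hz'y))
      ((Set.nonempty_Icc.2 hz).image _) (image_mono (Set.Icc_subset_Icc_right hzz'))
  have Sm0_mono : ∀ z z' : ℝ, 0 ≤ z → z ≤ z' → z' ≤ y → Sm f₁ f₂ 0 z ≤ Sm f₁ f₂ 0 z' := by
    intro z z' hz hzz' hz'y
    rcases eq_or_lt_of_le hz with h0 | h0
    · rw [Sm, ← h0, Set.Ico_self, Set.image_empty, Real.sSup_empty]
      exact Sm0_nonneg z' (hz.trans hzz') hz'y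
    · exact csSup_le_csSup (hbdds _ (Set.Ico_subset_Icc_self.trans
        (Set.Icc_subset_Icc_right hz'y))) ((Set.nonempty_Ico.2 h0).image _)
        (image_mono (Set.Ico_subset_Ico_right hzz'))
  have r_le : ∀ z z' : ℝ, 0 ≤ z → z ≤ z' → z' ≤ y →
      rW f₁ f₂ z' - rW f₁ f₂ z ≤ g z' - g z := by
    intro z z' hz hzz' hz'y
    have h1 := S0_mono z z' hz hzz' hz'y
    have h2 := Sm0_mono z z' hz hzz' hz'y
    rw [rW, rW, S_diag, S_diag]
    linarith
  have r_nonpos : ∀ z ∈ Set.Icc x y, rW f₁ f₂ z ≤ 0 := by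
    intro z hz
    have h1 := S0_ge_g z (hx.trans hz.1) hz.2
    have h2 := Sm0_nonneg z (hx.trans hz.1) hz.2
    rw [rW, S_diag]
    linarith
  have hbddr : BddAbove (rW f₁ f₂ '' Set.Icc x y) :=
    ⟨0, by rintro w ⟨z, hz, rfl⟩; exact r_nonpos z hz⟩
  set MW : ℝ := sSup (rW f₁ f₂ '' Set.Icc x y) with hMW
  have r_le_MW : ∀ w ∈ Set.Icc x y, rW f₁ f₂ w ≤ MW :=
    fun w hw => le_csSup hbddr (mem_image_of_mem _ hw)
  set IW : Set ℝ := {z | z ∈ Set.Icc x y ∧ rW f₁ f₂ z = MW} with hIW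
  set IF : Set ℝ := {z | z ∈ Set.Icc x y ∧ S f₁ f₂ z z = S f₁ f₂ x y} with hIF
  have hcIF : c ∈ IF := ⟨hmax, by rw [S_diag, hSxy]⟩
  have IF_bdda : BddAbove IF := ⟨y, fun z hz => hz.1.2⟩
  have IW_bddb : BddBelow IW := ⟨x, fun z hz => hz.1.1⟩
  have F3 : ∀ z ∈ IF, ∀ z' ∈ IW, z ≤ z' → z ∈ IW := by
    intro z hz z' hz' hzz'
    refine ⟨hz.1, le_antisymm (r_le_MW z hz.1) ?_⟩
    have h1 : rW f₁ f₂ z' - rW f₁ f₂ z ≤ g z' - g z :=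
      r_le z z' (hx.trans hz.1.1) hzz' hz'.1.2
    have h2 : g z' ≤ g c := hgc z' hz'.1
    have h3 : g z = g c := by
      have h4 := hz.2
      rw [S_diag, hSxy] at h4
      exact h4
    have h5 := hz'.2
    linarith
  have c_le_b : c ≤ sSup IF := le_csSup IF_bdda hcIF
  have b0 : (0:ℝ) ≤ sSup IF := (hx.trans hmax.1).trans c_le_b
  constructor
  · -- inf part
    have a_ge_x : x ≤ sInf IF := le_csInf ⟨c, hcIF⟩ (fun z hz => hz.1.1)
    by_cases hemp : IW = ∅
    · rw [hemp, Real.sInf_empty]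
      exact hx.trans a_ge_x
    · obtain ⟨w₀, hw₀⟩ := Set.nonempty_iff_ne_empty.2 hemp
      by_contra hcon
      push_neg at hcon
      have hcon' : sInf IF < sInf IW := hcon
      obtain ⟨z, hzIF, hzlt⟩ := Real.lt_sInf_add_pos ⟨c, hcIF⟩ (sub_pos.2 hcon')
      have hz_lt : z < sInf IW := by linarith
      rcases le_or_gt z w₀ with hle | hlt
      · have := csInf_le IW_bddb (F3 z hzIF w₀ hw₀ hle)
        linarith
      · have := csInf_le IW_bddb hw₀
        linarith
  · -- sup part
    by_cases hemp : IW = ∅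
    · rw [hemp, Real.sSup_empty]
      exact b0
    · obtain ⟨w₀, hw₀⟩ := Set.nonempty_iff_ne_empty.2 hemp
      apply csSup_le ⟨w₀, hw₀⟩
      intro z' hz'
      by_contra hlt
      push_neg at hlt
      have hz'nIF : z' ∉ IF := fun hmem => absurd (le_csSup IF_bdda hmem) (not_le.2 hlt)
      have hglt : g z' < g c := lt_of_le_of_ne (hgc z' hz'.1)
        (fun he => hz'nIF ⟨hz'.1, by rw [S_diag, hSxy]; exact he⟩)
      have hcz' : c ≤ z' := le_trans c_le_b hlt.le
      have h1 := r_le c z' (hx.trans hmax.1) hcz' hz'.1.2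
      have h2 : rW f₁ f₂ c ≤ MW := r_le_MW c hmax
      have h3 := hz'.2
      linarith
end
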